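/- Let n = 4k+2 with k > 0, fix i ∈ [n], and let S(i) consist of all subsets of [n] of odd size at least 2k+3 together with all subsets of size 2k+1 containing i. Then S(i) is a pairwise intersecting family of odd-size subsets, and |S(i)| = 2^(n-2). -/

import Mathlib

open Finset

def Sfam (k i : ℕ) : Finset (Finset ℕ) :=
  ((Finset.Icc 1 (4 * k + 2)).powerset).filter
    (fun A => (Odd A.card ∧ 2 * k + 3 ≤ A.card) ∨ (A.card = 2 * k + 1 ∧ i ∈ A))

/-- Sum of odd-index binomials is half of `2^n`. -/
lemma two_mul_odd_choose_sum (n : ℕ) (hn : n ≠ 0) :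
    2 * ∑ m ∈ (Finset.range (n + 1)).filter (fun m => Odd m), n.choose m = 2 ^ n := by
  set O := ∑ m ∈ (Finset.range (n + 1)).filter (fun m => Odd m), n.choose m with hO
  set E := ∑ m ∈ (Finset.range (n + 1)).filter (fun m => ¬ Odd m), n.choose m with hE
  have hsum : O + E = 2 ^ n := by
    rw [hO, hE, Finset.sum_filter_add_sum_filter_not]
    exact Nat.sum_range_choose n
  have halt : (E : ℤ) - (O : ℤ) = 0 := by
    have h := Int.alternating_sum_range_choose_of_ne hn
    rw [← Finset.sum_filter_add_sum_filter_not (Finset.range (n + 1)) (fun m => Odd m)] at h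
    have h1 : ∑ m ∈ (Finset.range (n + 1)).filter (fun m => Odd m),
        ((-1 : ℤ) ^ m * n.choose m) = -(O : ℤ) := by
      rw [hO, Nat.cast_sum, ← Finset.sum_neg_distrib]
      refine Finset.sum_congr rfl fun m hm => ?_
      rw [Finset.mem_filter] at hm
      rw [hm.2.neg_one_pow]; ring
    have h2 : ∑ m ∈ (Finset.range (n + 1)).filter (fun m => ¬ Odd m),
        ((-1 : ℤ) ^ m * n.choose m) = (E : ℤ) := by
      rw [hE, Nat.cast_sum]
      refine Finset.sum_congr rfl fun m hm => ?_
      rw [Finset.mem_filter] at hm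
      rw [(Nat.not_odd_iff_even.1 hm.2).neg_one_pow]; ring
    rw [h1, h2] at h
    linarith
  have hEO : E = O := by exact_mod_cast by linarith
  omega

/-- Counting subsets by a property of their cardinality. -/
lemma card_filter_card_prop (s : Finset ℕ) (p : ℕ → Prop) [DecidablePred p] :
    ((s.powerset).filter (fun A => p A.card)).card
      = ∑ m ∈ (Finset.range (s.card + 1)).filter p, s.card.choose m := by
  rw [Finset.card_filter]
  rw [Finset.sum_powerset_apply_card (fun m => if p m then 1 else 0)]
  rw [Finset.sum_filter]
  refine Finset.sum_congr rfl fun m _ => ?_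
  by_cases h : p m <;> simp [h]

/-- Counting subsets of a given size containing a fixed element. -/
lemma card_filter_card_mem (s : Finset ℕ) (i r : ℕ) (hi : i ∈ s) :
    ((s.powerset).filter (fun A => A.card = r + 1 ∧ i ∈ A)).card
      = (s.card - 1).choose r := by
  rw [← Finset.card_erase_of_mem hi, ← Finset.card_powersetCard]
  apply Finset.card_nbij' (fun A => A.erase i) (fun B => insert i B)
  · intro A hA
    simp only [Finset.mem_coe, Finset.mem_filter, Finset.mem_powerset] at hA
    rw [Finset.mem_coe, Finset.mem_powersetCard]
    exact ⟨Finset.erase_subset_erase i hA.1,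
      by rw [Finset.card_erase_of_mem hA.2.2, hA.2.1]; rfl⟩
  · intro B hB
    rw [Finset.mem_coe, Finset.mem_powersetCard] at hB
    have hiB : i ∉ B := fun h => (Finset.mem_erase.1 (hB.1 h)).1 rfl
    simp only [Finset.mem_coe, Finset.mem_filter, Finset.mem_powerset]
    refine ⟨?_, ?_, Finset.mem_insert_self i B⟩
    · intro x hx
      rcases Finset.mem_insert.1 hx with rfl | hx
      · exact hi
      · exact (Finset.erase_subset i s) (hB.1 hx)
    · rw [Finset.card_insert_of_notMem hiB, hB.2]
  · intro A hA
    simp only [Finset.mem_coe, Finset.mem_filter] at hA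
    exact Finset.insert_erase hA.2.2
  · intro B hB
    rw [Finset.mem_coe, Finset.mem_powersetCard] at hB
    exact Finset.erase_insert (fun h => (Finset.mem_erase.1 (hB.1 h)).1 rfl)

theorem Sfam_intersecting_and_card (k i : ℕ) (hk : 0 < k)
    (hi : i ∈ Finset.Icc 1 (4 * k + 2)) :
    (∀ A ∈ Sfam k i, ∀ B ∈ Sfam k i, (A ∩ B).Nonempty) ∧
    (Sfam k i).card = 2 ^ (4 * k) := by
  have hcardIcc : (Finset.Icc 1 (4 * k + 2)).card = 4 * k + 2 := by
    rw [Nat.card_Icc]; omega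
  constructor
  · -- intersecting
    intro A hA B hB
    simp only [Sfam, Finset.mem_filter, Finset.mem_powerset] at hA hB
    by_contra hne
    rw [Finset.not_nonempty_iff_eq_empty] at hne
    have hdisj : Disjoint A B := Finset.disjoint_iff_inter_eq_empty.2 hne
    have hcard : A.card + B.card ≤ 4 * k + 2 := by
      rw [← Finset.card_union_of_disjoint hdisj, ← hcardIcc]
      exact Finset.card_le_card (Finset.union_subset hA.1 hB.1)
    rcases hA.2 with ⟨_, hA2⟩ | ⟨hA2, hiA⟩ <;> rcases hB.2 with ⟨_, hB2⟩ | ⟨hB2, hiB⟩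
    · omega
    · omega
    · omega
    · have : i ∈ A ∩ B := Finset.mem_inter.2 ⟨hiA, hiB⟩
      rw [hne] at this; exact absurd this (Finset.notMem_empty i)
  · -- cardinality
    rw [Sfam, Finset.filter_or, Finset.card_union_of_disjoint]
    swap
    · rw [Finset.disjoint_left]
      intro A hA hA'
      simp only [Finset.mem_filter] at hA hA'
      omega
    rw [card_filter_card_prop _ (fun m => Odd m ∧ 2 * k + 3 ≤ m),
      card_filter_card_mem _ i (2 * k) hi, hcardIcc,
      show 4 * k + 2 - 1 = 4 * k + 1 from rfl]
    -- arithmetic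
    set S := ∑ m ∈ (Finset.range (4 * k + 2 + 1)).filter
        (fun m => Odd m ∧ 2 * k + 3 ≤ m), (4 * k + 2).choose m with hS
    have hT : 2 * ∑ m ∈ (Finset.range (4 * k + 2 + 1)).filter (fun m => Odd m),
        (4 * k + 2).choose m = 2 ^ (4 * k + 2) :=
      two_mul_odd_choose_sum (4 * k + 2) (by omega)
    have hsplit : ∑ m ∈ (Finset.range (4 * k + 2 + 1)).filter (fun m => Odd m),
        (4 * k + 2).choose m
        = (∑ m ∈ (Finset.range (4 * k + 2 + 1)).filter
            (fun m => Odd m ∧ 2 * k + 3 ≤ m), (4 * k + 2).choose m)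
          + ∑ m ∈ (Finset.range (4 * k + 2 + 1)).filter
            (fun m => Odd m ∧ ¬ (2 * k + 3 ≤ m)), (4 * k + 2).choose m := by
      rw [← Finset.sum_filter_add_sum_filter_not
        ((Finset.range (4 * k + 2 + 1)).filter (fun m => Odd m)) (fun m => 2 * k + 3 ≤ m),
        Finset.filter_filter, Finset.filter_filter]
    have hlow : (Finset.range (4 * k + 2 + 1)).filter (fun m => Odd m ∧ ¬ (2 * k + 3 ≤ m))
        = insert (2 * k + 1) ((Finset.range (4 * k + 2 + 1)).filter
            (fun m => Odd m ∧ m ≤ 2 * k - 1)) := by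
      ext m
      simp only [Finset.mem_insert, Finset.mem_filter, Finset.mem_range, Nat.odd_iff]
      omega
    have hrefl : ∑ m ∈ (Finset.range (4 * k + 2 + 1)).filter
        (fun m => Odd m ∧ m ≤ 2 * k - 1), (4 * k + 2).choose m = S := by
      rw [hS]
      apply Finset.sum_nbij' (fun m => 4 * k + 2 - m) (fun m => 4 * k + 2 - m)
      · intro m hm
        simp only [Finset.mem_filter, Finset.mem_range, Nat.odd_iff] at hm ⊢
        omega
      · intro m hm
        simp only [Finset.mem_filter, Finset.mem_range, Nat.odd_iff] at hm ⊢
        omega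
      · intro m hm
        simp only [Finset.mem_filter, Finset.mem_range] at hm
        omega
      · intro m hm
        simp only [Finset.mem_filter, Finset.mem_range] at hm
        omega
      · intro m hm
        simp only [Finset.mem_filter, Finset.mem_range] at hm
        exact (Nat.choose_symm (by omega)).symm
    have hmid : (4 * k + 2).choose (2 * k + 1) = 2 * (4 * k + 1).choose (2 * k) := by
      have h1 : (4 * k + 2).choose (2 * k + 1)
          = (4 * k + 1).choose (2 * k) + (4 * k + 1).choose (2 * k + 1) :=
        Nat.choose_succ_succ (4 * k + 1) (2 * k)
      have h2 : (4 * k + 1).choose (2 * k + 1) = (4 * k + 1).choose (2 * k) := by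
        have := Nat.choose_symm (n := 4 * k + 1) (k := 2 * k + 1) (by omega)
        rw [show 4 * k + 1 - (2 * k + 1) = 2 * k by omega] at this
        exact this.symm
      omega
    have hnot : (2 * k + 1) ∉ (Finset.range (4 * k + 2 + 1)).filter
        (fun m => Odd m ∧ m ≤ 2 * k - 1) := by
      simp only [Finset.mem_filter, Finset.mem_range, Nat.odd_iff]
      omega
    rw [hlow, Finset.sum_insert hnot, hrefl, hmid] at hsplit
    rw [hsplit, ← hS] at hT
    have hpow : 2 ^ (4 * k + 2) = 4 * 2 ^ (4 * k) := by ring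
    omega
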